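/- Let J be ν-strongly convex with minimizer w° and suppose the stochastic gradient satisfies E‖∇J(w) - ĝ(w)‖² ≤ 6δ²‖w° - w‖² + 3σ² for all w. Then the SGD iterates w_i = w_{i-1} - μ ĝ(w_{i-1}) with constant learning rate μ < ν/(7δ²) satisfy E‖w° - w_i‖² ≤ (1-μν)^i ‖w° - w_0‖² + 3μσ²/ν. -/

import Mathlib

open InnerProductSpace

lemma sgd_line_deriv {E : Type*} [NormedAddCommGroup E] [InnerProductSpace ℝ E] [CompleteSpace E]
    {J : E → ℝ} {G x : E} (h : HasGradientAt J G x) (v : E) :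
    HasDerivAt (fun t : ℝ => J (x + t • v)) (inner ℝ G v : ℝ) 0 := by
  have hf : HasFDerivAt J (toDual ℝ E G) x := h
  have hl : HasDerivAt (fun t : ℝ => x + t • v) v 0 := by
    simpa using ((hasDerivAt_id (0 : ℝ)).smul_const v).const_add x
  have hf' : HasFDerivAt J (toDual ℝ E G) ((fun t : ℝ => x + t • v) 0) := by simpa using hf
  have h2 := hf'.comp_hasDerivAt (0 : ℝ) hl
  simp at h2; exact h2

lemma sgd_strong_lower {E : Type*} [NormedAddCommGroup E] [InnerProductSpace ℝ E] [CompleteSpace E]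
    {J : E → ℝ} {ν : ℝ} {G x : E} (hsc : StrongConvexOn Set.univ ν J)
    (hgrad : HasGradientAt J G x) (y : E) :
    J x + (inner ℝ G (y - x) : ℝ) + ν / 2 * ‖y - x‖ ^ 2 ≤ J y := by
  set v := y - x with hv
  have hd := sgd_line_deriv hgrad v
  have hslope : Filter.Tendsto (fun t : ℝ => (J (x + t • v) - J x) / t) (nhdsWithin 0 (Set.Ioi 0))
      (nhds (inner ℝ G v : ℝ)) := by
    have h1 : Filter.Tendsto (slope (fun t : ℝ => J (x + t • v)) 0) (nhdsWithin 0 {(0:ℝ)}ᶜ)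
        (nhds (inner ℝ G v : ℝ)) := hasDerivAt_iff_tendsto_slope.mp hd
    have h2 := h1.mono_left (nhdsWithin_mono 0 (fun t ht => (Set.mem_compl_singleton_iff).2 (ne_of_gt ht)))
    refine h2.congr' ?_
    filter_upwards [self_mem_nhdsWithin] with t ht
    simp [slope_def_field, div_eq_mul_inv]
  have hbound : ∀ᶠ t in nhdsWithin (0:ℝ) (Set.Ioi 0),
      (J (x + t • v) - J x) / t ≤ J y - J x - (1 - t) * (ν / 2 * ‖v‖ ^ 2) := by
    filter_upwards [Ioo_mem_nhdsGT_of_mem (Set.mem_Ico.2 ⟨le_refl 0, zero_lt_one⟩)] with t ht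
    have hcx : x + t • v = t • y + (1 - t) • x := by
      rw [hv]; module
    have hc := hsc.2 (Set.mem_univ y) (Set.mem_univ x) ht.1.le (by linarith [ht.2] : (0:ℝ) ≤ 1 - t)
      (by ring)
    rw [← hcx] at hc
    simp only [smul_eq_mul] at hc
    rw [div_le_iff₀ ht.1]
    have hnorm : ‖y - x‖ = ‖v‖ := by rw [hv]
    rw [hnorm] at hc
    nlinarith [hc]
  have hlim2 : Filter.Tendsto (fun t : ℝ => J y - J x - (1 - t) * (ν / 2 * ‖v‖ ^ 2))
      (nhdsWithin (0:ℝ) (Set.Ioi 0)) (nhds (J y - J x - ν / 2 * ‖v‖ ^ 2)) := by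
    have hc : Continuous (fun t : ℝ => J y - J x - (1 - t) * (ν / 2 * ‖v‖ ^ 2)) := by continuity
    have := (hc.tendsto 0).mono_left (nhdsWithin_le_nhds (s := Set.Ioi (0:ℝ)))
    simpa using this
  have hfin := le_of_tendsto_of_tendsto hslope hlim2 hbound
  linarith



def sgdFinSnocEquiv (i N : ℕ) : ((Fin i → Fin N) × Fin N) ≃ (Fin (i+1) → Fin N) where
  toFun p := Fin.snoc p.1 p.2
  invFun f := (fun j => f j.castSucc, f (Fin.last i))
  left_inv p := by
    refine Prod.ext ?_ ?_
    · funext j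
      simp
    · simp
  right_inv f := by
    funext j
    induction j using Fin.lastCases with
    | last => simp
    | cast j => simp

set_option maxHeartbeats 2000000 in
/-- Convergence of SGD under strong convexity: if `J` is `ν`-strongly convex with
minimizer `w°`, the stochastic gradient `g` (uniform over `N` components) is unbiased
and satisfies `E‖∇J(w) - g(w)‖² ≤ 6δ²‖w°-w‖² + 3σ²`, and the gradient of `J` is
`δ`-Lipschitz, then the SGD iterates `w_i = w_{i-1} - μ g(w_{i-1})` with
`0 < μ < ν/(7δ²)` satisfy `E‖w° - w_i‖² ≤ (1-μν)^i ‖w° - w_0‖² + 3μσ²/ν`.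
The expectation is over the i.i.d. uniform index sequence, written as an average
over all `(Fin i → Fin N)` index tuples. -/
theorem sgd_convergence
    {E : Type*} [NormedAddCommGroup E] [InnerProductSpace ℝ E] [CompleteSpace E]
    {N : ℕ} (hN : 0 < N)
    (g : Fin N → E → E) (J : E → ℝ) (gradJ : E → E)
    (δ ν σ μ : ℝ) (wo w0 : E) (w : ℕ → (ℕ → Fin N) → E)
    (hgrad : ∀ x, HasGradientAt J (gradJ x) x)
    (hsc : StrongConvexOn Set.univ ν J)
    (hmin : IsMinOn J Set.univ wo)
    (hunbiased : ∀ x, (N : ℝ)⁻¹ • ∑ n, g n x = gradJ x)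
    (hnoise : ∀ x, (N : ℝ)⁻¹ * ∑ n, ‖gradJ x - g n x‖ ^ 2 ≤
      6 * δ ^ 2 * ‖wo - x‖ ^ 2 + 3 * σ ^ 2)
    (hLip : ∀ x y, ‖gradJ x - gradJ y‖ ≤ δ * ‖x - y‖)
    (hν : 0 < ν) (hδ : 0 < δ) (hμ0 : 0 < μ) (hμ : μ < ν / (7 * δ ^ 2))
    (hw0 : ∀ ω, w 0 ω = w0)
    (hupd : ∀ i ω, w (i + 1) ω = w i ω - μ • g (ω i) (w i ω))
    (i : ℕ) :
    ((N : ℝ) ^ i)⁻¹ *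
        ∑ ωf : Fin i → Fin N,
          ‖wo - w i (fun j => if h : j < i then ωf ⟨j, h⟩ else ⟨0, hN⟩)‖ ^ 2 ≤
      (1 - μ * ν) ^ i * ‖wo - w0‖ ^ 2 + 3 * μ * σ ^ 2 / ν := by
  classical
  have hNR : (0 : ℝ) < N := by exact_mod_cast hN
  have hgwo : gradJ wo = 0 := by
    have hloc : IsLocalMin J wo := hmin.isLocalMin (by simp [Filter.univ_mem])
    have h0 := hloc.hasFDerivAt_eq_zero (hgrad wo : HasFDerivAt J (toDual ℝ E (gradJ wo)) wo)
    exact (toDual ℝ E).injective (h0.trans (map_zero _).symm)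
  have hinner : ∀ x : E, (inner ℝ (wo - x) (gradJ x) : ℝ) ≤ -(ν * ‖wo - x‖ ^ 2) := by
    intro x
    have h1 := sgd_strong_lower hsc (hgrad x) wo
    have h2 := sgd_strong_lower hsc (hgrad wo) x
    rw [hgwo] at h2
    simp only [inner_zero_left] at h2
    have hn : ‖x - wo‖ = ‖wo - x‖ := norm_sub_rev _ _
    rw [hn] at h2
    rw [real_inner_comm]
    linarith
  have hgn : ∀ x : E, ‖gradJ x‖ ≤ δ * ‖wo - x‖ := by
    intro x
    have := hLip x wo
    rw [hgwo, sub_zero, norm_sub_rev] at this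
    exact this
  rcases subsingleton_or_nontrivial E with hE | hE
  · have h0 : ∀ z : E, wo - z = 0 := fun z => Subsingleton.elim _ _
    have hpos : (0:ℝ) ≤ 3 * μ * σ ^ 2 / ν := by positivity
    simp [h0]
    positivity
  have hνδ : ν ≤ δ := by
    obtain ⟨v, hv⟩ := exists_ne (0 : E)
    have h1 := hinner (wo + v)
    have h2 : wo - (wo + v) = -v := by abel
    have h3 : (inner ℝ (-v) (gradJ (wo + v)) : ℝ) ≥ -(‖v‖ * ‖gradJ (wo + v)‖) := by
      have := real_inner_le_norm v (gradJ (wo + v))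
      rw [inner_neg_left]
      linarith
    have h4 := hgn (wo + v)
    rw [h2, norm_neg] at h1
    rw [h2, norm_neg] at h4
    have hv2 : (0:ℝ) < ‖v‖ := norm_pos_iff.mpr hv
    have h5 : ‖v‖ * ‖gradJ (wo + v)‖ ≤ ‖v‖ * (δ * ‖v‖) :=
      mul_le_mul_of_nonneg_left h4 (norm_nonneg v)
    nlinarith [h1, h3, h5, mul_pos hv2 hv2]
  have hμ' : μ * (7 * δ ^ 2) < ν := by
    rw [lt_div_iff₀ (by positivity)] at hμ
    exact hμ
  have hq0 : 0 ≤ 1 - μ * ν := by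
    nlinarith [mul_lt_mul_of_pos_right hμ' hν, mul_le_mul hνδ hνδ hν.le hδ.le, sq_nonneg δ]

  have key : ∀ x : E, (N : ℝ)⁻¹ * ∑ n, ‖wo - (x - μ • g n x)‖ ^ 2 ≤
      (1 - μ * ν) * ‖wo - x‖ ^ 2 + 3 * μ ^ 2 * σ ^ 2 := by
    intro x
    have hsumg : ∑ n, g n x = (N : ℝ) • gradJ x := by
      rw [← hunbiased x, smul_smul, mul_inv_cancel₀ (ne_of_gt hNR), one_smul]
    have h1 : ∀ n, ‖wo - (x - μ • g n x)‖ ^ 2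
        = ‖wo - x‖ ^ 2 + 2 * μ * (inner ℝ (wo - x) (g n x) : ℝ) + μ ^ 2 * ‖g n x‖ ^ 2 := by
      intro n
      have hh : wo - (x - μ • g n x) = (wo - x) + μ • g n x := by abel
      rw [hh, norm_add_sq_real, inner_smul_right, norm_smul, mul_pow]
      simp [sq_abs]
      ring
    have h2 : ∀ n : Fin N, ‖g n x‖ ^ 2
        = ‖gradJ x‖ ^ 2 + 2 * (inner ℝ (gradJ x) (g n x - gradJ x) : ℝ) + ‖gradJ x - g n x‖ ^ 2 := by
      intro n
      have hh : g n x = gradJ x + (g n x - gradJ x) := by abel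
      conv_lhs => rw [hh]
      rw [norm_add_sq_real, norm_sub_rev (g n x)]
    have h3 : ∑ n, (g n x - gradJ x) = 0 := by
      rw [Finset.sum_sub_distrib, hsumg, Finset.sum_const, Finset.card_univ, Fintype.card_fin]
      rw [← Nat.cast_smul_eq_nsmul ℝ, sub_self]
    have h4 : ∑ n, (2 * (inner ℝ (gradJ x) (g n x - gradJ x) : ℝ)) = 0 := by
      rw [← Finset.mul_sum, ← inner_sum, h3, inner_zero_right, mul_zero]
    have hB : ∑ n, ‖g n x‖ ^ 2
        = (N:ℝ) * ‖gradJ x‖ ^ 2 + ∑ n, ‖gradJ x - g n x‖ ^ 2 := by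
      rw [Finset.sum_congr rfl (fun n _ => h2 n), Finset.sum_add_distrib, Finset.sum_add_distrib,
        h4, Finset.sum_const, Finset.card_univ, Fintype.card_fin, nsmul_eq_mul, add_zero]
    have h9 : (N : ℝ)⁻¹ * ∑ n, (inner ℝ (wo - x) (g n x) : ℝ) = (inner ℝ (wo - x) (gradJ x) : ℝ) := by
      rw [← inner_sum, hsumg, inner_smul_right, ← mul_assoc, inv_mul_cancel₀ (ne_of_gt hNR), one_mul]
    have hT : ∑ n, ‖wo - (x - μ • g n x)‖ ^ 2
        = (N:ℝ) * ‖wo - x‖ ^ 2 + (2 * μ) * (∑ n, (inner ℝ (wo - x) (g n x) : ℝ))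
          + μ ^ 2 * (∑ n, ‖g n x‖ ^ 2) := by
      rw [Finset.sum_congr rfl (fun n _ => h1 n), Finset.sum_add_distrib, Finset.sum_add_distrib,
        Finset.sum_const, Finset.card_univ, Fintype.card_fin, nsmul_eq_mul,
        ← Finset.mul_sum, ← Finset.mul_sum]
    set A := ∑ n, (inner ℝ (wo - x) (g n x) : ℝ) with hA
    set B := ∑ n, ‖g n x‖ ^ 2 with hBdef
    set C := ∑ n, ‖gradJ x - g n x‖ ^ 2 with hC
    have hexp : (N:ℝ)⁻¹ * ((N:ℝ) * ‖wo - x‖ ^ 2 + (2*μ) * A + μ^2 * B)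
        = ‖wo - x‖ ^ 2 + 2*μ*((N:ℝ)⁻¹ * A) + μ^2*((N:ℝ)⁻¹ * B) := by
      field_simp
    have hBeq : (N:ℝ)⁻¹ * B = ‖gradJ x‖ ^ 2 + (N:ℝ)⁻¹ * C := by
      rw [hB, mul_add, ← mul_assoc, inv_mul_cancel₀ (ne_of_gt hNR), one_mul]
    have h8 := hnoise x
    have h6 := hinner x
    have h7 : ‖gradJ x‖ ^ 2 ≤ δ ^ 2 * ‖wo - x‖ ^ 2 := by
      nlinarith [hgn x, norm_nonneg (gradJ x), norm_nonneg (wo - x)]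
    rw [hT, hexp, h9, hBeq]
    nlinarith [mul_le_mul_of_nonneg_left h6 (by linarith : (0:ℝ) ≤ 2*μ),
      mul_le_mul_of_nonneg_left h8 (sq_nonneg μ),
      mul_le_mul_of_nonneg_left h7 (sq_nonneg μ),
      mul_le_mul_of_nonneg_right hμ'.le (mul_nonneg hμ0.le (sq_nonneg ‖wo - x‖)),
      sq_nonneg ‖wo - x‖, sq_nonneg μ, sq_nonneg σ]
  have wdep : ∀ k (ω ω' : ℕ → Fin N), (∀ j, j < k → ω j = ω' j) → w k ω = w k ω' := by
    intro k
    induction k with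
    | zero => intro ω ω' _; rw [hw0, hw0]
    | succ k ihk =>
      intro ω ω' h
      rw [hupd, hupd, ihk ω ω' (fun j hj => h j (Nat.lt_succ_of_lt hj)), h k (Nat.lt_succ_self k)]
  induction i with
  | zero =>
    have hpos : (0:ℝ) ≤ 3 * μ * σ ^ 2 / ν := by positivity
    simp [hw0]
    linarith
  | succ i ih =>
    have hNi : ((N:ℝ) ^ i) ≠ 0 := by positivity
    have hNi1 : ((N:ℝ) ^ (i+1)) ≠ 0 := by positivity
    have hsum0 : (∑ ωf : Fin (i+1) → Fin N,
          ‖wo - w (i+1) (fun j => if h : j < i+1 then ωf ⟨j, h⟩ else ⟨0, hN⟩)‖ ^ 2)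
        = ∑ p : (Fin i → Fin N) × Fin N,
          ‖wo - w (i+1) (fun j => if h : j < i+1 then (sgdFinSnocEquiv i N p) ⟨j, h⟩ else ⟨0, hN⟩)‖ ^ 2 :=
      (Equiv.sum_comp (sgdFinSnocEquiv i N) (fun ωf : Fin (i+1) → Fin N =>
        ‖wo - w (i+1) (fun j => if h : j < i+1 then ωf ⟨j, h⟩ else ⟨0, hN⟩)‖ ^ 2)).symm
    have hterm : ∀ (τ : Fin i → Fin N) (n : Fin N),
        w (i+1) (fun j => if h : j < i+1 then (Fin.snoc τ n : Fin (i+1) → Fin N) ⟨j, h⟩ else ⟨0, hN⟩)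
        = w i (fun j => if h : j < i then τ ⟨j, h⟩ else ⟨0, hN⟩)
          - μ • g n (w i (fun j => if h : j < i then τ ⟨j, h⟩ else ⟨0, hN⟩)) := by
      intro τ n
      rw [hupd]
      have hA : w i (fun j => if h : j < i+1 then (Fin.snoc τ n : Fin (i+1) → Fin N) ⟨j, h⟩ else ⟨0, hN⟩)
          = w i (fun j => if h : j < i then τ ⟨j, h⟩ else ⟨0, hN⟩) := by
        apply wdep
        intro j hj
        have hj' : j < i + 1 := Nat.lt_succ_of_lt hj
        simp only [dif_pos hj, dif_pos hj']
        have hcast : (⟨j, hj'⟩ : Fin (i+1)) = Fin.castSucc ⟨j, hj⟩ := rfl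
        rw [hcast, Fin.snoc_castSucc]
      have hB : (if h : i < i+1 then (Fin.snoc τ n : Fin (i+1) → Fin N) ⟨i, h⟩ else ⟨0, hN⟩) = n := by
        simp only [dif_pos (Nat.lt_succ_self i)]
        have hlast : (⟨i, Nat.lt_succ_self i⟩ : Fin (i+1)) = Fin.last i := rfl
        rw [hlast, Fin.snoc_last]
      rw [hA, hB]
    have hre : (∑ p : (Fin i → Fin N) × Fin N,
          ‖wo - w (i+1) (fun j => if h : j < i+1 then (sgdFinSnocEquiv i N p) ⟨j, h⟩ else ⟨0, hN⟩)‖ ^ 2)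
        = ∑ τ : Fin i → Fin N, ∑ n : Fin N,
          ‖wo - (w i (fun j => if h : j < i then τ ⟨j, h⟩ else ⟨0, hN⟩)
            - μ • g n (w i (fun j => if h : j < i then τ ⟨j, h⟩ else ⟨0, hN⟩)))‖ ^ 2 := by
      rw [Fintype.sum_prod_type]
      refine Finset.sum_congr rfl fun τ _ => Finset.sum_congr rfl fun n _ => ?_
      have he : (sgdFinSnocEquiv i N (τ, n)) = Fin.snoc τ n := rfl
      rw [he, hterm τ n]
    have hbound : ∀ τ : Fin i → Fin N,
        (∑ n : Fin N, ‖wo - (w i (fun j => if h : j < i then τ ⟨j, h⟩ else ⟨0, hN⟩)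
            - μ • g n (w i (fun j => if h : j < i then τ ⟨j, h⟩ else ⟨0, hN⟩)))‖ ^ 2)
        ≤ (N:ℝ) * ((1 - μ * ν) * ‖wo - w i (fun j => if h : j < i then τ ⟨j, h⟩ else ⟨0, hN⟩)‖ ^ 2
            + 3 * μ ^ 2 * σ ^ 2) := by
      intro τ
      have hk := key (w i (fun j => if h : j < i then τ ⟨j, h⟩ else ⟨0, hN⟩))
      have heq : (∑ n : Fin N, ‖wo - (w i (fun j => if h : j < i then τ ⟨j, h⟩ else ⟨0, hN⟩)
            - μ • g n (w i (fun j => if h : j < i then τ ⟨j, h⟩ else ⟨0, hN⟩)))‖ ^ 2)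
          = (N:ℝ) * ((N:ℝ)⁻¹ * ∑ n : Fin N,
            ‖wo - (w i (fun j => if h : j < i then τ ⟨j, h⟩ else ⟨0, hN⟩)
            - μ • g n (w i (fun j => if h : j < i then τ ⟨j, h⟩ else ⟨0, hN⟩)))‖ ^ 2) := by
        rw [← mul_assoc, mul_inv_cancel₀ (ne_of_gt hNR), one_mul]
      rw [heq]
      exact mul_le_mul_of_nonneg_left hk hNR.le
    have hsum_le : (∑ τ : Fin i → Fin N, ∑ n : Fin N,
          ‖wo - (w i (fun j => if h : j < i then τ ⟨j, h⟩ else ⟨0, hN⟩)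
            - μ • g n (w i (fun j => if h : j < i then τ ⟨j, h⟩ else ⟨0, hN⟩)))‖ ^ 2)
        ≤ (N:ℝ) * (1 - μ * ν) * (∑ τ : Fin i → Fin N,
            ‖wo - w i (fun j => if h : j < i then τ ⟨j, h⟩ else ⟨0, hN⟩)‖ ^ 2)
          + (N:ℝ)^i * ((N:ℝ) * (3 * μ ^ 2 * σ ^ 2)) := by
      calc (∑ τ : Fin i → Fin N, ∑ n : Fin N,
          ‖wo - (w i (fun j => if h : j < i then τ ⟨j, h⟩ else ⟨0, hN⟩)
            - μ • g n (w i (fun j => if h : j < i then τ ⟨j, h⟩ else ⟨0, hN⟩)))‖ ^ 2)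
          ≤ ∑ τ : Fin i → Fin N, (N:ℝ) * ((1 - μ * ν) *
              ‖wo - w i (fun j => if h : j < i then τ ⟨j, h⟩ else ⟨0, hN⟩)‖ ^ 2
              + 3 * μ ^ 2 * σ ^ 2) := Finset.sum_le_sum fun τ _ => hbound τ
        _ = (N:ℝ) * (1 - μ * ν) * (∑ τ : Fin i → Fin N,
              ‖wo - w i (fun j => if h : j < i then τ ⟨j, h⟩ else ⟨0, hN⟩)‖ ^ 2)
            + (N:ℝ)^i * ((N:ℝ) * (3 * μ ^ 2 * σ ^ 2)) := by
          simp only [mul_add, ← mul_assoc]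
          rw [Finset.sum_add_distrib, ← Finset.mul_sum, Finset.sum_const, Finset.card_univ]
          simp [Fintype.card_fun, mul_comm, mul_assoc, mul_left_comm]
    rw [hsum0, hre]
    have hfin1 : ((N:ℝ) ^ (i+1))⁻¹ * ((N:ℝ) * (1 - μ * ν) * (∑ τ : Fin i → Fin N,
            ‖wo - w i (fun j => if h : j < i then τ ⟨j, h⟩ else ⟨0, hN⟩)‖ ^ 2)
          + (N:ℝ)^i * ((N:ℝ) * (3 * μ ^ 2 * σ ^ 2)))
        = (1 - μ * ν) * (((N:ℝ) ^ i)⁻¹ * (∑ τ : Fin i → Fin N,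
            ‖wo - w i (fun j => if h : j < i then τ ⟨j, h⟩ else ⟨0, hN⟩)‖ ^ 2))
          + 3 * μ ^ 2 * σ ^ 2 := by
      rw [pow_succ]
      field_simp
    calc ((N:ℝ) ^ (i+1))⁻¹ * (∑ τ : Fin i → Fin N, ∑ n : Fin N,
          ‖wo - (w i (fun j => if h : j < i then τ ⟨j, h⟩ else ⟨0, hN⟩)
            - μ • g n (w i (fun j => if h : j < i then τ ⟨j, h⟩ else ⟨0, hN⟩)))‖ ^ 2)
        ≤ ((N:ℝ) ^ (i+1))⁻¹ * ((N:ℝ) * (1 - μ * ν) * (∑ τ : Fin i → Fin N,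
            ‖wo - w i (fun j => if h : j < i then τ ⟨j, h⟩ else ⟨0, hN⟩)‖ ^ 2)
          + (N:ℝ)^i * ((N:ℝ) * (3 * μ ^ 2 * σ ^ 2))) := by
          exact mul_le_mul_of_nonneg_left hsum_le (by positivity)
      _ = (1 - μ * ν) * (((N:ℝ) ^ i)⁻¹ * (∑ τ : Fin i → Fin N,
            ‖wo - w i (fun j => if h : j < i then τ ⟨j, h⟩ else ⟨0, hN⟩)‖ ^ 2))
          + 3 * μ ^ 2 * σ ^ 2 := hfin1
      _ ≤ (1 - μ * ν) * ((1 - μ * ν) ^ i * ‖wo - w0‖ ^ 2 + 3 * μ * σ ^ 2 / ν)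
          + 3 * μ ^ 2 * σ ^ 2 := by
          exact add_le_add (mul_le_mul_of_nonneg_left ih hq0) le_rfl
      _ = (1 - μ * ν) ^ (i+1) * ‖wo - w0‖ ^ 2 + 3 * μ * σ ^ 2 / ν := by
          field_simp
          ring
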